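/- Let {s_1,...,s_K} be an (M,K,L)-schedule sequence set with respect to a partition of the K nodes into W nonempty groups whose smallest group size is k ≥ 2. Then L ≥ 4W(k−1). -/

import Mathlib

/-- A schedule symbol for a system with `W` channels: `T m` means "transmit on
channel `m`" and `R r` means "receive on channel `r`". -/
inductive SchedSym (W : ℕ) where
  | T : Fin W → SchedSym W
  | R : Fin W → SchedSym W
deriving DecidableEq

/-- `IsScheduleSet W K L G s` says that `s` is an `(M,K,L)`-schedule sequence set
(for any number of channels `M ≥ W`) with respect to the partition of the `K` nodes
into the `W` groups given by the group-assignment map `G` (node `i` lies in group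
`G i`). Sequences are modeled as `ℕ → SchedSym W`, indexed modulo `L`.

* `own_channel`: a node in group `m` only uses the transmit symbol `T m`;
* `intra`: intra-group requirement (eq. (1) of the paper) for all offsets `τ ∈ Z_L^K`;
* `inter`: inter-group requirement (eq. (2) of the paper) for all offsets `τ ∈ Z_L^K`. -/
structure IsScheduleSet (W K L : ℕ) (G : Fin K → Fin W)
    (s : Fin K → ℕ → SchedSym W) : Prop where
  own_channel : ∀ (i : Fin K) (t : ℕ) (m : Fin W), s i t = SchedSym.T m → m = G i
  intra : ∀ τ : Fin K → ℕ, (∀ i, τ i < L) → ∀ i j : Fin K, i ≠ j → G i = G j →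
    ∃ t < L, s i ((t + τ i) % L) = SchedSym.T (G i) ∧
      s j ((t + τ j) % L) = SchedSym.R (G i) ∧
      ∀ x : Fin K, x ≠ i → x ≠ j → G x = G i → s x ((t + τ x) % L) ≠ SchedSym.T (G i)
  inter : ∀ τ : Fin K → ℕ, (∀ i, τ i < L) → ∀ i j : Fin K, G i ≠ G j →
    ∃ t < L, s i ((t + τ i) % L) = SchedSym.T (G i) ∧
      s j ((t + τ j) % L) = SchedSym.R (G i) ∧
      ∀ x : Fin K, x ≠ i → G x = G i → s x ((t + τ x) % L) ≠ SchedSym.T (G i)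

/-- The size of group `m` under the group-assignment map `G`. -/
def groupSize {W K : ℕ} (G : Fin K → Fin W) (m : Fin W) : ℕ :=
  (Finset.univ.filter (fun i => G i = m)).card

section key
variable {W K L : ℕ} {G : Fin K → Fin W} {s : Fin K → ℕ → SchedSym W}

/-- every node in a group of size ≥ 2 has a transmit slot -/
lemma exists_transmit (hL : 0 < L) (hs : IsScheduleSet W K L G s)
    (x y : Fin K) (hxy : x ≠ y) (hxyG : G x = G y) :
    ∃ t < L, s x t = SchedSym.T (G x) := by
  obtain ⟨t, htL, h1, -⟩ := hs.intra (fun _ => 0) (fun _ => hL) x y hxy hxyG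
  exact ⟨(t + 0) % L, Nat.mod_lt _ hL, h1⟩

/-- Key counting lemma: for any shift `σ`, the number of slots where `i` transmits
and the `σ`-shifted `j` receives on `i`'s channel exceeds the number of blockers. -/
lemma key (hL : 0 < L) (hs : IsScheduleSet W K L G s)
    (htr : ∀ x : Fin K, ∃ t < L, s x t = SchedSym.T (G x))
    (i j : Fin K) (hij : i ≠ j) (σ : ℕ) (hσ : σ < L) :
    (Finset.univ.filter (fun x : Fin K => x ≠ i ∧ x ≠ j ∧ G x = G i)).card + 1
      ≤ ((Finset.range L).filter (fun t => s i t = SchedSym.T (G i) ∧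
          s j ((t + σ) % L) = SchedSym.R (G i))).card := by
  classical
  by_contra hcon
  push_neg at hcon
  set S : Finset ℕ := (Finset.range L).filter (fun t => s i t = SchedSym.T (G i) ∧
      s j ((t + σ) % L) = SchedSym.R (G i)) with hS
  set Bl : Finset (Fin K) := Finset.univ.filter
      (fun x : Fin K => x ≠ i ∧ x ≠ j ∧ G x = G i) with hBl
  have hcard : S.card ≤ Bl.card := by omega
  have hK : Nonempty (Fin K) := ⟨i⟩
  -- injection from S into Bl
  obtain ⟨f, hfmem, hfinj⟩ : ∃ f : ℕ → Fin K, (↑S : Set ℕ) ⊆ f ⁻¹' ↑Bl ∧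
      Set.InjOn f ↑S := by
    apply Set.Finite.exists_injOn_of_encard_le (S.finite_toSet)
    rw [Set.encard_coe_eq_coe_finsetCard, Set.encard_coe_eq_coe_finsetCard]
    exact_mod_cast hcard
  -- transmit slots
  choose tsl htsl1 htsl2 using htr
  -- preimage choice
  have hpre : ∀ x : Fin K, ∃ u : ℕ, (∃ v ∈ S, f v = x) → (u ∈ S ∧ f u = x) := by
    intro x
    by_cases h : ∃ v ∈ S, f v = x
    · obtain ⟨v, hv1, hv2⟩ := h
      exact ⟨v, fun _ => ⟨hv1, hv2⟩⟩
    · exact ⟨0, fun h' => absurd h' h⟩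
  choose pre hpre' using hpre
  -- the adversarial offsets
  set τ : Fin K → ℕ := fun x =>
    if x = i then 0 else if x = j then σ else
      if (∃ v ∈ S, f v = x) then (tsl x + L - pre x) % L else 0 with hτ
  have hτlt : ∀ x, τ x < L := by
    intro x
    simp only [hτ]
    split_ifs <;> first | exact hL | exact hσ | exact Nat.mod_lt _ hL
  have hτi : τ i = 0 := by simp [hτ]
  have hτj : τ j = σ := by simp [hτ, hij.symm]
  -- get the good slot from the schedule property
  obtain ⟨t, htL, h1, h2, h3⟩ :
      ∃ t < L, s i ((t + τ i) % L) = SchedSym.T (G i) ∧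
        s j ((t + τ j) % L) = SchedSym.R (G i) ∧
        ∀ x : Fin K, x ≠ i → x ≠ j → G x = G i →
          s x ((t + τ x) % L) ≠ SchedSym.T (G i) := by
    by_cases hGij : G i = G j
    · obtain ⟨t, htL, h1, h2, h3⟩ := hs.intra τ hτlt i j hij hGij
      exact ⟨t, htL, h1, h2, h3⟩
    · obtain ⟨t, htL, h1, h2, h3⟩ := hs.inter τ hτlt i j hGij
      exact ⟨t, htL, h1, h2, fun x hxi _ hGx => h3 x hxi hGx⟩
  rw [hτi] at h1
  rw [hτj] at h2
  have htmod : (t + 0) % L = t := by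
    rw [Nat.add_zero, Nat.mod_eq_of_lt htL]
  rw [htmod] at h1
  have htS : t ∈ S := by
    rw [hS]
    simp only [Finset.mem_filter, Finset.mem_range]
    exact ⟨htL, h1, h2⟩
  -- the blocker assigned to t kills it
  set x := f t with hx
  have hxBl : x ∈ Bl := hfmem htS
  rw [hBl, Finset.mem_filter] at hxBl
  obtain ⟨-, hxi, hxj, hxG⟩ := hxBl
  have hex : ∃ v ∈ S, f v = x := ⟨t, htS, rfl⟩
  obtain ⟨hpreS, hpref⟩ := hpre' x hex
  have hpret : pre x = t := hfinj hpreS htS (by rw [hpref])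
  have hτx : τ x = (tsl x + L - t) % L := by
    simp only [hτ, if_neg hxi, if_neg hxj, if_pos hex, hpret]
  have hcalc : (t + τ x) % L = tsl x := by
    rw [hτx]
    calc (t + (tsl x + L - t) % L) % L = (t + (tsl x + L - t)) % L :=
          Nat.ModEq.add_left t (Nat.mod_modEq _ L)
      _ = (tsl x + L) % L := by rw [Nat.add_sub_cancel' (by omega : t ≤ tsl x + L)]
      _ = tsl x := by rw [Nat.add_mod_right, Nat.mod_eq_of_lt (htsl1 x)]
  have := h3 x hxi hxj hxG
  rw [hcalc] at this
  exact this (hxG ▸ htsl2 x)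

lemma count_le (hL : 0 < L) (i j : Fin K) :
    ∑ σ ∈ Finset.range L, ((Finset.range L).filter (fun t => s i t = SchedSym.T (G i) ∧
        s j ((t + σ) % L) = SchedSym.R (G i))).card
      ≤ ((Finset.range L).filter (fun t => s i t = SchedSym.T (G i))).card *
        ((Finset.range L).filter (fun u => s j u = SchedSym.R (G i))).card := by
  classical
  have hB : ∀ t : ℕ, ((Finset.range L).filter
        (fun σ => s j ((t + σ) % L) = SchedSym.R (G i))).card
      ≤ ((Finset.range L).filter (fun u => s j u = SchedSym.R (G i))).card := by
    intro t
    apply Finset.card_le_card_of_injOn (fun σ => (t + σ) % L)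
    · intro σ hσ
      simp only [Finset.mem_coe, Finset.mem_filter, Finset.mem_range] at hσ ⊢
      exact ⟨Nat.mod_lt _ hL, hσ.2⟩
    · intro σ1 h1 σ2 h2 h
      simp only [Finset.coe_filter, Set.mem_setOf_eq, Finset.mem_range] at h1 h2
      have h' := Nat.ModEq.add_left_cancel' t (h : (t + σ1) % L = (t + σ2) % L)
      rwa [Nat.ModEq, Nat.mod_eq_of_lt h1.1, Nat.mod_eq_of_lt h2.1] at h'
  calc ∑ σ ∈ Finset.range L, ((Finset.range L).filter (fun t => s i t = SchedSym.T (G i) ∧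
          s j ((t + σ) % L) = SchedSym.R (G i))).card
      = ∑ σ ∈ Finset.range L, ∑ t ∈ Finset.range L,
          (if s i t = SchedSym.T (G i) ∧ s j ((t + σ) % L) = SchedSym.R (G i) then 1 else 0) := by
        refine Finset.sum_congr rfl fun σ _ => Finset.card_filter _ _
    _ = ∑ t ∈ Finset.range L, ∑ σ ∈ Finset.range L,
          (if s i t = SchedSym.T (G i) ∧ s j ((t + σ) % L) = SchedSym.R (G i) then 1 else 0) :=
        Finset.sum_comm
    _ ≤ ∑ t ∈ Finset.range L, (if s i t = SchedSym.T (G i) then 1 else 0) *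
          ((Finset.range L).filter (fun u => s j u = SchedSym.R (G i))).card := by
        apply Finset.sum_le_sum
        intro t _
        by_cases hP : s i t = SchedSym.T (G i)
        · simp only [hP, true_and, if_pos, one_mul]
          rw [← Finset.card_filter]
          exact hB t
        · simp [hP]
    _ = (∑ t ∈ Finset.range L, if s i t = SchedSym.T (G i) then 1 else 0) *
          ((Finset.range L).filter (fun u => s j u = SchedSym.R (G i))).card := by
        rw [Finset.sum_mul]
    _ = _ := by rw [← Finset.card_filter]

lemma slot_partition (hs : IsScheduleSet W K L G s) (i : Fin K) :
    ((Finset.range L).filter (fun t => s i t = SchedSym.T (G i))).card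
      + ∑ m : Fin W, ((Finset.range L).filter (fun t => s i t = SchedSym.R m)).card = L := by
  classical
  have h1 : ∀ t ∈ Finset.range L,
      (if s i t = SchedSym.T (G i) then 1 else 0)
        + ∑ m : Fin W, (if s i t = SchedSym.R m then 1 else 0) = 1 := by
    intro t _
    cases h : s i t with
    | T m' =>
        have hm : m' = G i := hs.own_channel i t m' h
        subst hm
        rw [if_pos rfl]
        rw [show (fun m => if SchedSym.T (G i) = SchedSym.R m then (1:ℕ) else 0)
            = fun _ => (0:ℕ) from funext fun m =>
              if_neg (fun hc => nomatch hc)]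
        simp
    | R r =>
        rw [if_neg (show ¬ (SchedSym.R (W := W) r = SchedSym.T (G i)) from fun hc => nomatch hc)]
        rw [show (fun m => if SchedSym.R (W := W) r = SchedSym.R m then (1:ℕ) else 0)
            = fun m => if r = m then (1:ℕ) else 0 from funext fun m => by
              by_cases hrm : r = m
              · rw [if_pos (by rw [hrm]), if_pos hrm]
              · rw [if_neg (fun hc => hrm (by injection hc)), if_neg hrm]]
        simp
  calc ((Finset.range L).filter (fun t => s i t = SchedSym.T (G i))).card
        + ∑ m : Fin W, ((Finset.range L).filter (fun t => s i t = SchedSym.R m)).card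
      = ∑ t ∈ Finset.range L, (if s i t = SchedSym.T (G i) then 1 else 0)
        + ∑ m : Fin W, ∑ t ∈ Finset.range L, (if s i t = SchedSym.R m then 1 else 0) := by
        rw [Finset.card_filter]
        exact congrArg _ (Finset.sum_congr rfl fun m _ => Finset.card_filter _ _)
    _ = ∑ t ∈ Finset.range L, ((if s i t = SchedSym.T (G i) then 1 else 0)
        + ∑ m : Fin W, (if s i t = SchedSym.R m then 1 else 0)) := by
        rw [Finset.sum_add_distrib, Finset.sum_comm]
    _ = ∑ t ∈ Finset.range L, 1 := Finset.sum_congr rfl h1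
    _ = L := by simp

end key

/-- if `{s_1,...,s_K}` is an `(M,K,L)`-schedule sequence set with
respect to a partition into `W` nonempty groups with smallest group size `k ≥ 2`, then
`L ≥ 4W(k−1)`. -/
theorem schedule_set_period_lower_bound_four
    (M K L W k : ℕ) (hL : 0 < L) (hW : 1 ≤ W) (hWM : W ≤ M) (hMK : M ≤ K)
    (hk : 2 ≤ k)
    (G : Fin K → Fin W) (hG : Function.Surjective G)
    (hkmin : ∀ m : Fin W, k ≤ groupSize G m)
    (hkex : ∃ m : Fin W, groupSize G m = k)
    (s : Fin K → ℕ → SchedSym W) (hs : IsScheduleSet W K L G s) :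
    4 * W * (k - 1) ≤ L := by
  classical
  have hK1 : 0 < K := lt_of_lt_of_le (lt_of_lt_of_le hW hWM) hMK
  -- every node has a transmit slot
  have htr : ∀ x : Fin K, ∃ t < L, s x t = SchedSym.T (G x) := by
    intro x
    have h2 : 1 < (Finset.univ.filter (fun i : Fin K => G i = G x)).card := by
      have := hkmin (G x); unfold groupSize at this; omega
    obtain ⟨y, hy, hyx⟩ := Finset.exists_mem_ne h2 x
    exact exists_transmit hL hs x y (Ne.symm hyx)
      ((Finset.mem_filter.mp hy).2.symm)
  -- transmit-slot counts and argmax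
  set a : Fin K → ℕ :=
    fun i => ((Finset.range L).filter (fun t => s i t = SchedSym.T (G i))).card with ha
  obtain ⟨i0, -, hi0⟩ := Finset.exists_max_image Finset.univ a
    ⟨⟨0, hK1⟩, Finset.mem_univ _⟩
  set b : Fin W → ℕ :=
    fun m => ((Finset.range L).filter (fun t => s i0 t = SchedSym.R m)).card with hb
  -- per-channel lower bound
  have hchan : ∀ m : Fin W, (k - 1) * L ≤ a i0 * b m := by
    intro m
    -- a transmitter in group m distinct from i0
    obtain ⟨im, himm, him0⟩ : ∃ im : Fin K, G im = m ∧ im ≠ i0 := by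
      have h2 : 1 < (Finset.univ.filter (fun i : Fin K => G i = m)).card := by
        have := hkmin m; unfold groupSize at this; omega
      obtain ⟨y, hy, hyx⟩ := Finset.exists_mem_ne h2 i0
      exact ⟨y, (Finset.mem_filter.mp hy).2, hyx⟩
    -- blocker count
    have hbl : k - 2 ≤ (Finset.univ.filter
        (fun x : Fin K => x ≠ im ∧ x ≠ i0 ∧ G x = G im)).card := by
      have hsub : Finset.univ.filter (fun x : Fin K => G x = G im)
          ⊆ (Finset.univ.filter
              (fun x : Fin K => x ≠ im ∧ x ≠ i0 ∧ G x = G im)) ∪ {im, i0} := by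
        intro x hx
        simp only [Finset.mem_filter, Finset.mem_univ, true_and] at hx
        by_cases h1 : x = im
        · simp [h1]
        · by_cases h2 : x = i0
          · simp [h2]
          · simp [h1, h2, hx]
      have hcard := Finset.card_le_card hsub
      have h3 : ({im, i0} : Finset (Fin K)).card ≤ 2 :=
        Finset.card_insert_le _ _ |>.trans (by simp)
      have h4 := Finset.card_union_le (Finset.univ.filter
          (fun x : Fin K => x ≠ im ∧ x ≠ i0 ∧ G x = G im)) ({im, i0} : Finset (Fin K))
      have h5 : k ≤ (Finset.univ.filter (fun x : Fin K => G x = G im)).card := by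
        have := hkmin (G im); unfold groupSize at this; omega
      omega
    -- per-shift bound from the key lemma
    have hkey : ∀ σ ∈ Finset.range L, k - 1 ≤
        ((Finset.range L).filter (fun t => s im t = SchedSym.T (G im) ∧
          s i0 ((t + σ) % L) = SchedSym.R (G im))).card := by
      intro σ hσ
      have := key hL hs htr im i0 him0 σ (Finset.mem_range.mp hσ)
      omega
    have h1 : (k - 1) * L ≤ ∑ σ ∈ Finset.range L,
        ((Finset.range L).filter (fun t => s im t = SchedSym.T (G im) ∧
          s i0 ((t + σ) % L) = SchedSym.R (G im))).card := by
      calc (k - 1) * L = ∑ _σ ∈ Finset.range L, (k - 1) := by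
            rw [Finset.sum_const, Finset.card_range, smul_eq_mul, mul_comm]
        _ ≤ _ := Finset.sum_le_sum hkey
    have h2 := count_le (G := G) (s := s) hL im i0
    have h3 : a im ≤ a i0 := hi0 im (Finset.mem_univ _)
    have h4 : ((Finset.range L).filter
        (fun u => s i0 u = SchedSym.R (G im))).card = b m := by rw [himm]
    calc (k - 1) * L ≤ _ := h1
      _ ≤ a im * ((Finset.range L).filter
          (fun u => s i0 u = SchedSym.R (G im))).card := h2
      _ = a im * b m := by rw [h4]
      _ ≤ a i0 * b m := Nat.mul_le_mul_right _ h3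
  -- sum over channels
  have hpart : a i0 + ∑ m : Fin W, b m = L := slot_partition hs i0
  have hsum : W * ((k - 1) * L) ≤ a i0 * (L - a i0) := by
    calc W * ((k - 1) * L) = ∑ _m : Fin W, (k - 1) * L := by
          rw [Finset.sum_const, Finset.card_univ, Fintype.card_fin, smul_eq_mul]
      _ ≤ ∑ m : Fin W, a i0 * b m := Finset.sum_le_sum fun m _ => hchan m
      _ = a i0 * ∑ m : Fin W, b m := by rw [Finset.mul_sum]
      _ = a i0 * (L - a i0) := by
          congr 1
          omega
  have hAL : a i0 ≤ L := by omega
  -- AM–GM: 4 A (L - A) ≤ L²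
  have hamgm : 4 * (a i0 * (L - a i0)) ≤ L * L := by
    have h1 : (4 : ℤ) * ((a i0 : ℤ) * ((L : ℤ) - a i0)) ≤ (L : ℤ) * L := by
      nlinarith [sq_nonneg ((L : ℤ) - 2 * a i0)]
    have h2 : ((L - a i0 : ℕ) : ℤ) = (L : ℤ) - a i0 := by
      omega
    exact_mod_cast h2 ▸ h1
  have hfin : (4 * W * (k - 1)) * L ≤ L * L := by
    calc (4 * W * (k - 1)) * L = 4 * (W * ((k - 1) * L)) := by ring
      _ ≤ 4 * (a i0 * (L - a i0)) := Nat.mul_le_mul_left _ hsum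
      _ ≤ L * L := hamgm
  exact Nat.le_of_mul_le_mul_right hfin hL
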